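/- Let θ ∈ (π/4, π/2), let v₁, v₂ be unit vectors with (v₁, v₂) a right-handed system spanning angle 2θ, set v₃ = −(v₁+v₂)/|v₁+v₂| and v₃^⊥ its π/2 rotation. Let F ∈ ℝ^{2×2} satisfy det F = 1, |Fv₁| > 1, |Fv₂| > 1 and Fv₁·Fv₂ < 0, and set F_t = F(I + t v₃^⊥ ⊗ v₃). Then the equation |F_t v₁| = 1 has two distinct real solutions in t, and both solutions have the same sign. -/

import Mathlib

noncomputable section

def dot2 (a b : Fin 2 → ℝ) : ℝ := a 0 * b 0 + a 1 * b 1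

def norm2 (a : Fin 2 → ℝ) : ℝ := Real.sqrt (dot2 a a)

def perp (a : Fin 2 → ℝ) : Fin 2 → ℝ := ![-(a 1), a 0]

lemma norm2_eq_one_iff (a : Fin 2 → ℝ) : norm2 a = 1 ↔ dot2 a a = 1 := by
  rw [norm2, Real.sqrt_eq_one]

lemma dot2_gt_one (a : Fin 2 → ℝ) (h : 1 < norm2 a) : 1 < dot2 a a := by
  rw [norm2] at h
  have h0 : (0:ℝ) ≤ dot2 a a := by
    have := sq_nonneg (a 0); have := sq_nonneg (a 1)
    simp only [dot2]; nlinarith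
  nlinarith [Real.sq_sqrt h0, Real.sqrt_nonneg (dot2 a a), h]

lemma lagrange (F : Matrix (Fin 2) (Fin 2) ℝ) (hdet : F.det = 1)
    (x y : Fin 2 → ℝ) :
    (dot2 (F.mulVec x) (F.mulVec y))^2
      = dot2 (F.mulVec x) (F.mulVec x) * dot2 (F.mulVec y) (F.mulVec y)
        - (x 0 * y 1 - x 1 * y 0)^2 := by
  rw [Matrix.det_fin_two] at hdet
  simp only [dot2, Matrix.mulVec, dotProduct, Fin.sum_univ_two]
  linear_combination (-(F 0 0 * F 1 1 - F 0 1 * F 1 0 + 1)) *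
    (x 0 * y 1 - x 1 * y 0)^2 * hdet

set_option maxHeartbeats 2000000 in
theorem stmt11 (θ : ℝ) (hθ : θ ∈ Set.Ioo (Real.pi/4) (Real.pi/2))
    (v₁ v₂ : Fin 2 → ℝ) (hv₁ : norm2 v₁ = 1) (hv₂ : norm2 v₂ = 1)
    (hangle : dot2 v₁ v₂ = Real.cos (2*θ))
    (hright : dot2 (perp v₁) v₂ = Real.sin (2*θ))
    (v₃ : Fin 2 → ℝ) (hv₃ : v₃ = fun i => -(v₁ i + v₂ i) / norm2 (fun j => v₁ j + v₂ j))
    (F : Matrix (Fin 2) (Fin 2) ℝ) (hdet : F.det = 1)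
    (h1 : 1 < norm2 (F.mulVec v₁)) (h2 : 1 < norm2 (F.mulVec v₂))
    (hdotFF : dot2 (F.mulVec v₁) (F.mulVec v₂) < 0)
    (Ft : ℝ → Matrix (Fin 2) (Fin 2) ℝ)
    (hFt : Ft = fun t => F * (1 + t • Matrix.vecMulVec (perp v₃) v₃)) :
    ∃ t₁ t₂ : ℝ, t₁ ≠ t₂ ∧ 0 < t₁ * t₂ ∧
      norm2 ((Ft t₁).mulVec v₁) = 1 ∧ norm2 ((Ft t₂).mulVec v₁) = 1 ∧
      ∀ t : ℝ, norm2 ((Ft t).mulVec v₁) = 1 → t = t₁ ∨ t = t₂ := by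
  obtain ⟨hθ1, hθ2⟩ := hθ
  have hpi := Real.pi_pos
  have hθpos : 0 < θ := lt_trans (by positivity) hθ1
  have hcpos : 0 < Real.cos θ := Real.cos_pos_of_mem_Ioo ⟨by linarith, hθ2⟩
  have hspos : 0 < Real.sin θ := Real.sin_pos_of_pos_of_lt_pi hθpos (by linarith)
  set s := Real.sin θ with hs
  set cθ := Real.cos θ with hc
  have hs0 : s ≠ 0 := ne_of_gt hspos
  have hc0 : cθ ≠ 0 := ne_of_gt hcpos
  have hpyth : s ^ 2 + cθ ^ 2 = 1 := Real.sin_sq_add_cos_sq θ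
  have hclt : cθ < Real.sqrt 2 / 2 := by
    have h := Real.cos_lt_cos_of_nonneg_of_le_pi (by positivity : (0:ℝ) ≤ Real.pi/4)
      (le_of_lt hθ2 |>.trans (by linarith)) hθ1
    rwa [Real.cos_pi_div_four] at h
  have hc2lt : cθ^2 < 1/2 := by
    have h2 : Real.sqrt 2 ^ 2 = 2 := Real.sq_sqrt (by norm_num)
    have h3 : cθ^2 < (Real.sqrt 2 / 2)^2 :=
      pow_lt_pow_left₀ hclt hcpos.le (by norm_num)
    rw [div_pow, h2] at h3
    linarith
  have hs1 : s ≤ 1 := Real.sin_le_one θ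
  have ha : v₁ 0 ^2 + v₁ 1 ^2 = 1 := by
    have h := (norm2_eq_one_iff v₁).mp hv₁; simp only [dot2] at h; linear_combination h
  have hb : v₂ 0 ^2 + v₂ 1 ^2 = 1 := by
    have h := (norm2_eq_one_iff v₂).mp hv₂; simp only [dot2] at h; linear_combination h
  have hdot : v₁ 0 * v₂ 0 + v₁ 1 * v₂ 1 = 2*cθ^2 - 1 := by
    have h := hangle; simp only [dot2] at h
    rw [Real.cos_two_mul] at h; linarith [h]
  have hcross : v₁ 0 * v₂ 1 - v₁ 1 * v₂ 0 = 2*s*cθ := by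
    have h := hright
    simp only [dot2, perp, Matrix.cons_val_zero, Matrix.cons_val_one, Matrix.head_cons] at h
    rw [Real.sin_two_mul] at h; linarith [h]
  -- norm of v₁ + v₂
  have hn : norm2 (fun j => v₁ j + v₂ j) = 2*cθ := by
    have h : dot2 (fun j => v₁ j + v₂ j) (fun j => v₁ j + v₂ j) = (2*cθ)^2 := by
      simp only [dot2]; linear_combination ha + hb + 2*hdot
    rw [norm2, h, Real.sqrt_sq (by positivity)]
  -- v₃ components
  have hv30 : v₃ 0 = -(v₁ 0 + v₂ 0)/(2*cθ) := by rw [hv₃, hn]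
  have hv31 : v₃ 1 = -(v₁ 1 + v₂ 1)/(2*cθ) := by rw [hv₃, hn]
  -- dot2 v₃ v₁ = -cθ
  have hcdot : v₃ 0 * v₁ 0 + v₃ 1 * v₁ 1 = -cθ := by
    rw [hv30, hv31]
    field_simp
    linear_combination -ha - hdot
  -- right-handedness consequences
  have hXY : (s*(v₁ 1 + v₂ 1) - cθ*(v₁ 0 - v₂ 0))^2
      + (s*(v₁ 0 + v₂ 0) + cθ*(v₁ 1 - v₂ 1))^2 = 0 := by
    linear_combination (s^2+cθ^2)*ha + (s^2+cθ^2)*hb + 2*(s^2-cθ^2)*hdot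
      - 4*s*cθ*hcross - 4*cθ^2*hpyth
  have hX : s*(v₁ 1 + v₂ 1) - cθ*(v₁ 0 - v₂ 0) = 0 := by
    have h2 : (s*(v₁ 1 + v₂ 1) - cθ*(v₁ 0 - v₂ 0))^2 = 0 := by
      linarith [sq_nonneg (s*(v₁ 1 + v₂ 1) - cθ*(v₁ 0 - v₂ 0)),
        sq_nonneg (s*(v₁ 0 + v₂ 0) + cθ*(v₁ 1 - v₂ 1))]
    exact pow_eq_zero_iff two_ne_zero |>.mp h2
  have hY : s*(v₁ 0 + v₂ 0) + cθ*(v₁ 1 - v₂ 1) = 0 := by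
    have h2 : (s*(v₁ 0 + v₂ 0) + cθ*(v₁ 1 - v₂ 1))^2 = 0 := by
      linarith [sq_nonneg (s*(v₁ 1 + v₂ 1) - cθ*(v₁ 0 - v₂ 0)),
        sq_nonneg (s*(v₁ 0 + v₂ 0) + cθ*(v₁ 1 - v₂ 1))]
    exact pow_eq_zero_iff two_ne_zero |>.mp h2
  -- perp v₃ in terms of v₁ - v₂
  have hperp0 : perp v₃ 0 = (v₁ 0 - v₂ 0)/(2*s) := by
    simp only [perp, Matrix.cons_val_zero, hv31]
    field_simp
    linear_combination hX
  have hperp1 : perp v₃ 1 = (v₁ 1 - v₂ 1)/(2*s) := by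
    simp only [perp, Matrix.cons_val_one, Matrix.head_cons, Matrix.cons_val_zero, hv30]
    field_simp
    linear_combination -hY
  -- key quantities
  obtain ⟨u, hu⟩ : ∃ x, x = F.mulVec v₁ := ⟨_, rfl⟩
  obtain ⟨u₂, hu₂⟩ : ∃ x, x = F.mulVec v₂ := ⟨_, rfl⟩
  obtain ⟨w, hwdef⟩ : ∃ x, x = F.mulVec (perp v₃) := ⟨_, rfl⟩
  rw [← hu] at h1
  rw [← hu₂] at h2
  rw [← hu, ← hu₂] at hdotFF
  have hw0 : w 0 = (u 0 - u₂ 0)/(2*s) := by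
    simp only [hwdef, hu, hu₂, Matrix.mulVec, dotProduct, Fin.sum_univ_two,
      hperp0, hperp1]
    field_simp; ring
  have hw1 : w 1 = (u 1 - u₂ 1)/(2*s) := by
    simp only [hwdef, hu, hu₂, Matrix.mulVec, dotProduct, Fin.sum_univ_two,
      hperp0, hperp1]
    field_simp; ring
  obtain ⟨W, hW⟩ : ∃ x, x = dot2 w w := ⟨_, rfl⟩
  obtain ⟨C, hC⟩ : ∃ x, x = dot2 u u := ⟨_, rfl⟩
  have hCgt : 1 < C := by rw [hC]; exact dot2_gt_one u h1
  have hC2gt : 1 < dot2 u₂ u₂ := dot2_gt_one u₂ h2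
  have hWval : 4*s^2*W = dot2 u u - 2 * dot2 u u₂ + dot2 u₂ u₂ := by
    simp only [hW, dot2, hw0, hw1]
    field_simp; ring
  have hWnn : 0 ≤ W := by
    rw [hW]; simp only [dot2]
    exact add_nonneg (mul_self_nonneg _) (mul_self_nonneg _)
  have hWpos : cθ^2 < W := by
    have hCgt' : 1 < dot2 u u := by rw [← hC]; exact hCgt
    have h4 : 2 < 4*s^2*W := by rw [hWval]; linarith
    have hs2 : s^2 ≤ 1 := by
      rw [sq]; exact mul_le_one₀ hs1 hspos.le hs1
    have h5 : 0 ≤ (1 - s^2) * W := mul_nonneg (by linarith) hWnn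
    have h6 : 1/2 < W := by linarith [h4, h5]
    linarith [hc2lt]
  -- expansion of (Ft t).mulVec v₁
  have hFtv : ∀ t : ℝ, ∀ i : Fin 2, (Ft t).mulVec v₁ i = u i + (t * (-cθ)) * w i := by
    intro t i
    simp only [hFt, hu, hwdef, Matrix.mulVec, dotProduct, Fin.sum_univ_two,
      Matrix.mul_apply, Matrix.add_apply, Matrix.one_apply, Matrix.smul_apply,
      Matrix.vecMulVec_apply, smul_eq_mul]
    fin_cases i
    · simp
      linear_combination (t * (F 0 0 * perp v₃ 0 + F 0 1 * perp v₃ 1)) * hcdot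
    · simp
      linear_combination (t * (F 1 0 * perp v₃ 0 + F 1 1 * perp v₃ 1)) * hcdot
  -- quadratic form
  obtain ⟨B, hB⟩ : ∃ x, x = 2*(-cθ)*(dot2 w u) := ⟨_, rfl⟩
  obtain ⟨A, hA⟩ : ∃ x, x = cθ^2*W := ⟨_, rfl⟩
  have hg : ∀ t : ℝ, dot2 ((Ft t).mulVec v₁) ((Ft t).mulVec v₁) = A*t^2 + B*t + C := by
    intro t
    simp only [dot2, hFtv t 0, hFtv t 1, hA, hB, hC, hW]
    ring
  have hApos : 0 < A := by
    rw [hA]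
    have h' : 0 < cθ^2 := by positivity
    have hW0 : 0 < W := lt_trans (by positivity) hWpos
    exact mul_pos h' hW0
  -- discriminant
  have hlag : (dot2 w u)^2 = C * W - cθ^2 := by
    have h := lagrange F hdet (perp v₃) v₁
    rw [← hwdef, ← hu] at h
    have hcr : perp v₃ 0 * v₁ 1 - perp v₃ 1 * v₁ 0 = cθ := by
      simp only [perp, Matrix.cons_val_zero, Matrix.cons_val_one, Matrix.head_cons]
      linarith [hcdot]
    rw [hcr] at h
    rw [hC, hW]
    linear_combination h
  obtain ⟨D, hD⟩ : ∃ x, x = B^2 - 4*A*(C-1) := ⟨_, rfl⟩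
  have hDval : D = 4*cθ^2*(W - cθ^2) := by
    rw [hD, hB, hA]; linear_combination 4*cθ^2 * hlag
  have hDpos : 0 < D := by
    rw [hDval]
    have h' : 0 < W - cθ^2 := by linarith [hWpos]
    have h'' : 0 < 4*cθ^2 := by positivity
    exact mul_pos h'' h'
  have hsqD : Real.sqrt D ^ 2 = D := Real.sq_sqrt (le_of_lt hDpos)
  have hsqDpos : 0 < Real.sqrt D := Real.sqrt_pos.mpr hDpos
  have hA0 : A ≠ 0 := ne_of_gt hApos
  have hroot : ∀ r : ℝ, r^2 = D → A*((-B+r)/(2*A))^2 + B*((-B+r)/(2*A)) + C = 1 := by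
    intro r hr
    rw [hD] at hr
    field_simp
    linear_combination hr
  refine ⟨(-B + Real.sqrt D)/(2*A), (-B - Real.sqrt D)/(2*A), ?_, ?_, ?_, ?_, ?_⟩
  · intro h
    have h2A : (2*A) ≠ 0 := by positivity
    field_simp at h
    linarith
  · have heq : (-B + Real.sqrt D)/(2*A) * ((-B - Real.sqrt D)/(2*A)) = (C-1)/A := by
      rw [div_mul_div_comm]
      rw [div_eq_div_iff (by positivity) hA0]
      linear_combination (-A)*hsqD - A*hD
    rw [heq]
    have : 0 < C - 1 := by linarith
    positivity
  · rw [norm2_eq_one_iff, hg]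
    exact hroot _ hsqD
  · rw [norm2_eq_one_iff, hg]
    have h' : (-B - Real.sqrt D)/(2*A) = (-B + (- Real.sqrt D))/(2*A) := by ring
    rw [h']
    exact hroot _ (by rw [neg_sq]; exact hsqD)
  · intro t ht
    rw [norm2_eq_one_iff, hg] at ht
    have hfac : A * ((t - (-B + Real.sqrt D)/(2*A)) * (t - (-B - Real.sqrt D)/(2*A))) = 0 := by
      field_simp
      linear_combination 4*A*ht - hsqD - hD
    rcases mul_eq_zero.mp hfac with h' | h'
    · exact absurd h' hA0
    rcases mul_eq_zero.mp h' with h'' | h''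
    · left; linarith [sub_eq_zero.mp h'']
    · right; linarith [sub_eq_zero.mp h'']
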